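/- If A is a ring with right Krull dimension, then every semiprime quotient A/I (I a semiprime ideal) is a right Goldie ring. -/

import Mathlib

/-- A subset `S` of a ring is nilpotent (of some exponent `n > 0`) if all products of
`n` elements of `S` vanish. -/
def SetNilpotent {A : Type} [Ring A] (S : Set A) : Prop :=
  ∃ n : ℕ, 0 < n ∧ ∀ l : List A, l.length = n → (∀ x ∈ l, x ∈ S) → l.prod = 0
/-- `DevLE α P` says the (Gabriel–Rentschler) deviation of the poset `P` is at most the
ordinal `α`: every descending chain has all but finitely many of its factor intervals of
deviation strictly less than `α` (trivial factors allowed). -/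
def DevLE (α : Ordinal.{0}) (P : Type) [Preorder P] : Prop :=
  ∀ f : ℕ → P, Antitone f → ∃ N : ℕ, ∀ n, N ≤ n →
    f (n + 1) = f n ∨
      ∃ β : {o : Ordinal.{0} // o < α}, DevLE β.1 {x : P // f (n + 1) ≤ x ∧ x ≤ f n}
termination_by α
decreasing_by exact β.2

/-- A ring has right Krull dimension if the lattice of its right ideals (equivalently,
left ideals of `Aᵐᵒᵖ`) has deviation, i.e. deviation at most some ordinal. -/
def HasRightKrullDim (A : Type) [Ring A] : Prop :=
  ∃ α : Ordinal.{0}, DevLE α (Ideal Aᵐᵒᵖ)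
/-- The right annihilator of a subset `X` of `A`, viewed as a left ideal of `Aᵐᵒᵖ`
(i.e. a right ideal of `A`). -/
def rightAnn (A : Type) [Ring A] (X : Set A) : Ideal Aᵐᵒᵖ where
  carrier := {a | ∀ x ∈ X, x * a.unop = 0}
  add_mem' := by
    intro a b ha hb x hx
    simp only [MulOpposite.unop_add, mul_add, ha x hx, hb x hx, add_zero]
  zero_mem' := by intro x hx; simp
  smul_mem' := by
    intro c a ha x hx
    simp only [smul_eq_mul, MulOpposite.unop_mul, ← mul_assoc, ha x hx, zero_mul]

/-- A ring `A` is right Goldie if it has finite right uniform dimension (no infinite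
independent family of nonzero right ideals) and the ascending chain condition on
right annihilators. -/
def IsRightGoldie (A : Type) [Ring A] : Prop :=
  (¬ ∃ f : ℕ → Ideal Aᵐᵒᵖ, (∀ n, f n ≠ ⊥) ∧ iSupIndep f) ∧
  ∀ f : ℕ →o Ideal Aᵐᵒᵖ, (∀ n, ∃ X : Set A, f n = rightAnn A X) →
    ∃ N : ℕ, ∀ m : ℕ, N ≤ m → f m = f N

/- ======================= auxiliary development ======================= -/

open MulOpposite

section OrderAux

theorem DevLE.of_embed : ∀ (α : Ordinal.{0}) {P Q : Type} [PartialOrder P] [Preorder Q]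
    (φ : P → Q), (∀ a b : P, a ≤ b ↔ φ a ≤ φ b) → DevLE α Q → DevLE α P := by
  intro α
  induction α using Ordinal.induction with
  | h α IH =>
    intro P Q _ _ φ hφ hQ
    rw [DevLE]
    intro f hf
    have hf' : Antitone (fun n => φ (f n)) := fun a b hab => (hφ _ _).1 (hf hab)
    rw [DevLE] at hQ
    obtain ⟨N, hN⟩ := hQ (fun n => φ (f n)) hf'
    refine ⟨N, fun n hn => ?_⟩
    rcases hN n hn with h | ⟨β, hβ⟩
    · exact Or.inl (le_antisymm ((hφ _ _).2 (le_of_eq h)) ((hφ _ _).2 (le_of_eq h.symm)))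
    · refine Or.inr ⟨β, ?_⟩
      refine IH β.1 β.2
        (fun (x : {x : P // f (n + 1) ≤ x ∧ x ≤ f n}) =>
          (⟨φ x.1, (hφ _ _).1 x.2.1, (hφ _ _).1 x.2.2⟩ :
            {x : Q // (fun n => φ (f n)) (n + 1) ≤ x ∧ x ≤ (fun n => φ (f n)) n}))
        (fun a b => ?_) hβ
      constructor
      · intro hab
        exact Subtype.mk_le_mk.2 ((hφ _ _).1 hab)
      · intro hab
        exact Subtype.coe_le_coe.1 ((hφ _ _).2 (Subtype.mk_le_mk.1 hab))

theorem ratSq_strictMono : StrictMono (fun q : ℚ => q / (1 + |q|)) := by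
  intro q r hqr
  have hq : (0:ℚ) < 1 + |q| := by positivity
  have hr : (0:ℚ) < 1 + |r| := by positivity
  rw [div_lt_div_iff₀ hq hr]
  rcases le_or_gt 0 q with h1 | h1 <;> rcases le_or_gt 0 r with h2 | h2
  · rw [abs_of_nonneg h1, abs_of_nonneg h2]; nlinarith
  · linarith [abs_nonneg q, abs_nonneg r, le_abs_self r]
  · rw [abs_of_nonneg h2, abs_of_neg h1]; nlinarith [abs_nonneg q, abs_nonneg r]
  · rw [abs_of_neg h1, abs_of_neg h2]; nlinarith

theorem ratSq_bound (q : ℚ) : |q / (1 + |q|)| < 1 := by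
  have hq : (0:ℚ) < 1 + |q| := by positivity
  rw [abs_div, abs_of_pos hq, div_lt_one hq]
  linarith [abs_nonneg q]

theorem DevLE.no_rat_chain : ∀ (α : Ordinal.{0}) {P : Type} [PartialOrder P],
    DevLE α P → ∀ g : ℚ → P, StrictMono g → False := by
  intro α
  induction α using Ordinal.induction with
  | h α IH =>
    intro P _ hdev g hg
    have hanti : Antitone (fun n : ℕ => g (-(n : ℚ))) := by
      intro a b hab
      exact hg.monotone (by
        have : (a:ℚ) ≤ (b:ℚ) := Nat.cast_le.2 hab
        linarith)
    rw [DevLE] at hdev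
    obtain ⟨N, hN⟩ := hdev _ hanti
    have hlt : (-((N:ℚ) + 1)) < -(N:ℚ) := by linarith
    rcases hN N le_rfl with h | ⟨β, hβ⟩
    · have : g (-((N:ℚ) + 1)) < g (-(N:ℚ)) := hg hlt
      rw [show (-((N:ℕ)+1:ℕ) : ℚ) = -((N:ℚ)+1) by push_cast; ring] at h
      exact absurd h (ne_of_lt this)
    · set ψ : ℚ → ℚ := fun q => (-(N:ℚ) - 1/2) + (q / (1 + |q|)) / 2 with hψ
      have hψm : StrictMono ψ := fun a b hab => by
        have := ratSq_strictMono hab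
        simp only [hψ]
        linarith
      have hψb : ∀ q, -((N:ℚ)+1) ≤ ψ q ∧ ψ q ≤ -(N:ℚ) := by
        intro q
        have h1 := ratSq_bound q
        rw [abs_lt] at h1
        constructor <;> simp only [hψ] <;> linarith [h1.1, h1.2]
      have hcast : (-((N:ℕ)+1:ℕ) : ℚ) = -((N:ℚ)+1) := by push_cast; ring
      refine IH β.1 β.2 ?_ (fun q =>
        (⟨g (ψ q), ?_, ?_⟩ : {x : P // (fun n : ℕ => g (-(n : ℚ))) (N + 1) ≤ x ∧
          x ≤ (fun n : ℕ => g (-(n : ℚ))) N})) ?_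
      · exact hβ
      · show g (-(((N:ℕ)+1:ℕ) : ℚ)) ≤ g (ψ q)
        rw [hcast]
        exact hg.monotone (hψb q).1
      · exact hg.monotone (hψb q).2
      · intro a b hab
        exact Subtype.mk_lt_mk.2 (hg (hψm hab))

end OrderAux

section RingAux

variable {R : Type} [Ring R]

theorem mem_rightAnn {A : Type} [Ring A] {X : Set A} {a : Aᵐᵒᵖ} :
    a ∈ rightAnn A X ↔ ∀ x ∈ X, x * a.unop = 0 := Iff.rfl

noncomputable def idel (B T : Ideal Rᵐᵒᵖ) : Ordinal.{0} :=
  sInf {o : Ordinal.{0} | DevLE o {x : Ideal Rᵐᵒᵖ // B ≤ x ∧ x ≤ T}}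

variable {α₀ : Ordinal.{0}}

theorem idel_mem_top (hdev : DevLE α₀ (Ideal Rᵐᵒᵖ)) (B T : Ideal Rᵐᵒᵖ) :
    DevLE α₀ {x : Ideal Rᵐᵒᵖ // B ≤ x ∧ x ≤ T} :=
  DevLE.of_embed α₀ (fun x => x.1) (fun _ _ => Iff.rfl) hdev

theorem idel_devle (hdev : DevLE α₀ (Ideal Rᵐᵒᵖ)) (B T : Ideal Rᵐᵒᵖ) :
    DevLE (idel B T) {x : Ideal Rᵐᵒᵖ // B ≤ x ∧ x ≤ T} := by
  have h : {o : Ordinal.{0} | DevLE o {x : Ideal Rᵐᵒᵖ // B ≤ x ∧ x ≤ T}}.Nonempty :=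
    ⟨α₀, idel_mem_top hdev B T⟩
  exact csInf_mem h

theorem idel_le {B T : Ideal Rᵐᵒᵖ} {β : Ordinal.{0}}
    (h : DevLE β {x : Ideal Rᵐᵒᵖ // B ≤ x ∧ x ≤ T}) : idel B T ≤ β :=
  csInf_le (OrderBot.bddBelow _) h

theorem idel_mono (hdev : DevLE α₀ (Ideal Rᵐᵒᵖ)) {B B' T T' : Ideal Rᵐᵒᵖ}
    (hB : B ≤ B') (hT : T' ≤ T) : idel B' T' ≤ idel B T :=
  idel_le (DevLE.of_embed _
    (fun x => (⟨x.1, hB.trans x.2.1, x.2.2.trans hT⟩ : {x : Ideal Rᵐᵒᵖ // B ≤ x ∧ x ≤ T}))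
    (fun _ _ => Iff.rfl) (idel_devle hdev B T))

/-- right multiplication by `c` in `Rᵐᵒᵖ` (= left multiplication in `R`), as a linear map -/
def rmul (c : Rᵐᵒᵖ) : Rᵐᵒᵖ →ₗ[Rᵐᵒᵖ] Rᵐᵒᵖ where
  toFun x := x * c
  map_add' a b := add_mul a b c
  map_smul' m x := by simp [smul_eq_mul, mul_assoc]

theorem ess_rAnn_mul (z s : R)
    (h : ∀ J : Ideal Rᵐᵒᵖ, J ≠ ⊥ → rightAnn R {z} ⊓ J ≠ ⊥) :
    ∀ J : Ideal Rᵐᵒᵖ, J ≠ ⊥ → rightAnn R {z * s} ⊓ J ≠ ⊥ := by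
  intro J hJ
  obtain ⟨x, hxJ, hx0⟩ := (Submodule.ne_bot_iff J).1 hJ
  by_cases hsu : s * x.unop = 0
  · refine (Submodule.ne_bot_iff _).2 ⟨x, ⟨?_, hxJ⟩, hx0⟩
    intro y hy
    rw [Set.mem_singleton_iff] at hy
    subst hy
    rw [mul_assoc, hsu, mul_zero]
  · have hJ' : Submodule.span Rᵐᵒᵖ {op (s * x.unop)} ≠ ⊥ := by
      simp only [ne_eq, Submodule.span_singleton_eq_bot, op_eq_zero_iff]
      exact hsu
    obtain ⟨y, ⟨hy1, hy2⟩, hy0⟩ := (Submodule.ne_bot_iff _).1 (h _ hJ')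
    obtain ⟨d, hd⟩ := Submodule.mem_span_singleton.1 hy2
    have hyval : y.unop = s * x.unop * d.unop := by
      rw [← hd]; simp [smul_eq_mul, unop_mul]
    have hzy : z * y.unop = 0 := mem_rightAnn.1 hy1 z rfl
    refine (Submodule.ne_bot_iff _).2 ⟨op (x.unop * d.unop), ⟨?_, ?_⟩, ?_⟩
    · intro w hw
      rw [Set.mem_singleton_iff] at hw
      subst hw
      rw [unop_op, mul_assoc, show s * (x.unop * d.unop) = s * x.unop * d.unop from
        (mul_assoc _ _ _).symm, ← hyval, hzy]
    · have : op (x.unop * d.unop) = d • x := by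
        simp [smul_eq_mul, op_mul]
      rw [this]
      exact J.smul_mem d hxJ
    · intro h0
      apply hy0
      have : x.unop * d.unop = 0 := (op_eq_zero_iff _).1 h0
      rw [← op_unop y, hyval, mul_assoc, this, mul_zero, op_zero]

theorem no_singular (hdev : DevLE α₀ (Ideal Rᵐᵒᵖ))
    (hsp : ∀ w : R, w ≠ 0 → ∃ t, w * t * w ≠ 0)
    (z : R) (hz : z ≠ 0)
    (hess : ∀ J : Ideal Rᵐᵒᵖ, J ≠ ⊥ → rightAnn R {z} ⊓ J ≠ ⊥) : False := by
  classical
  set Z₀ : Ideal Rᵐᵒᵖ := Submodule.span Rᵐᵒᵖ {op z} with hZ₀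
  have hZ₀ne : Z₀ ≠ ⊥ := by
    rw [hZ₀]
    simp only [ne_eq, Submodule.span_singleton_eq_bot, op_eq_zero_iff]
    exact hz
  set S : Set Ordinal.{0} := {o | ∃ C : Ideal Rᵐᵒᵖ, C ≠ ⊥ ∧ C ≤ Z₀ ∧ idel ⊥ C = o} with hS
  have hSne : S.Nonempty := ⟨idel ⊥ Z₀, Z₀, hZ₀ne, le_rfl, rfl⟩
  set γ := sInf S with hγ
  obtain ⟨C₀, hC₀ne, hC₀le, hC₀γ⟩ := csInf_mem hSne
  rw [← hγ] at hC₀γ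
  have hmin : ∀ C : Ideal Rᵐᵒᵖ, C ≠ ⊥ → C ≤ Z₀ → γ ≤ idel ⊥ C :=
    fun C h1 h2 => csInf_le (OrderBot.bddBelow _) ⟨C, h1, h2, rfl⟩
  have hall : ∀ C : Ideal Rᵐᵒᵖ, C ≠ ⊥ → C ≤ C₀ → idel ⊥ C = γ := by
    intro C h1 h2
    refine le_antisymm ?_ (hmin C h1 (h2.trans hC₀le))
    calc idel ⊥ C ≤ idel ⊥ C₀ := idel_mono hdev le_rfl h2
    _ = γ := hC₀γ
  have hcrit : ∃ C : Ideal Rᵐᵒᵖ, C ≠ ⊥ ∧ C ≤ C₀ ∧ ∀ N, ⊥ < N → N < C → idel N C < γ := by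
    by_contra hnc
    push_neg at hnc
    have step : ∀ C : {D : Ideal Rᵐᵒᵖ // D ≠ ⊥ ∧ D ≤ C₀},
        ∃ N : Ideal Rᵐᵒᵖ, (N ≠ ⊥ ∧ N ≤ C₀) ∧ N < C.1 ∧ γ ≤ idel N C.1 := by
      rintro ⟨C, hC1, hC2⟩
      obtain ⟨N, h1, h2, h3⟩ := hnc C hC1 hC2
      exact ⟨N, ⟨bot_lt_iff_ne_bot.1 h1, h2.le.trans hC2⟩, h2, h3⟩
    choose stepF hstep using step
    set F : ℕ → {D : Ideal Rᵐᵒᵖ // D ≠ ⊥ ∧ D ≤ C₀} :=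
      fun n => Nat.rec ⟨C₀, hC₀ne, le_rfl⟩ (fun _ p => ⟨stepF p, (hstep p).1⟩) n with hF
    have hFsucc : ∀ n, (F (n+1)).1 = stepF (F n) := fun n => rfl
    have hstrict : ∀ n, (F (n+1)).1 < (F n).1 := fun n => by
      rw [hFsucc]; exact (hstep (F n)).2.1
    have hγn : ∀ n, γ ≤ idel (F (n+1)).1 (F n).1 := fun n => by
      rw [hFsucc]; exact (hstep (F n)).2.2
    set f' : ℕ → {x : Ideal Rᵐᵒᵖ // ⊥ ≤ x ∧ x ≤ C₀} :=
      fun n => ⟨(F n).1, bot_le, (F n).2.2⟩ with hf'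
    have hanti : Antitone f' :=
      antitone_nat_of_succ_le (fun n => Subtype.mk_le_mk.2 (hstrict n).le)
    have hdevγ : DevLE γ {x : Ideal Rᵐᵒᵖ // ⊥ ≤ x ∧ x ≤ C₀} := by
      rw [← hC₀γ]
      exact idel_devle hdev ⊥ C₀
    rw [DevLE] at hdevγ
    obtain ⟨M, hM⟩ := hdevγ f' hanti
    rcases hM M le_rfl with h | ⟨β, hβ⟩
    · exact absurd (congrArg Subtype.val h) (ne_of_lt (hstrict M))
    · have htrans : DevLE β.1 {x : Ideal Rᵐᵒᵖ // (F (M+1)).1 ≤ x ∧ x ≤ (F M).1} := by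
        refine DevLE.of_embed β.1
          (fun x => (⟨⟨x.1, bot_le, x.2.2.trans (F M).2.2⟩, x.2.1, x.2.2⟩ :
            {x : {x : Ideal Rᵐᵒᵖ // ⊥ ≤ x ∧ x ≤ C₀} // f' (M + 1) ≤ x ∧ x ≤ f' M}))
          (fun _ _ => Iff.rfl) hβ
      exact absurd ((hγn M).trans (idel_le htrans)) (not_le.2 β.2)
  obtain ⟨C, hCne, hCle, hCcrit⟩ := hcrit
  obtain ⟨x, hxC, hx0⟩ := (Submodule.ne_bot_iff C).1 hCne
  set w := x.unop with hw
  have hwx : op w = x := op_unop x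
  have hw0 : w ≠ 0 := fun hh => hx0 (by rw [← hwx, hh, op_zero])
  have hxZ : x ∈ Z₀ := (hCle.trans hC₀le) hxC
  obtain ⟨d, hd⟩ := Submodule.mem_span_singleton.1 hxZ
  have hws : w = z * d.unop := by
    rw [hw, ← hd]
    simp [smul_eq_mul, unop_mul]
  obtain ⟨t, hwt⟩ := hsp w hw0
  have hEss : ∀ J : Ideal Rᵐᵒᵖ, J ≠ ⊥ → rightAnn R {w * t} ⊓ J ≠ ⊥ := by
    have h2 := ess_rAnn_mul z (d.unop * t) hess
    have heq : z * (d.unop * t) = w * t := by rw [hws, mul_assoc]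
    rw [heq] at h2
    exact h2
  set W : Ideal Rᵐᵒᵖ := Submodule.span Rᵐᵒᵖ {op w} with hWdef
  have hWle : W ≤ C := by
    rw [hWdef, Submodule.span_le, Set.singleton_subset_iff]
    rw [hwx]
    exact hxC
  have hWne : W ≠ ⊥ := by
    rw [hWdef]
    simp only [ne_eq, Submodule.span_singleton_eq_bot, op_eq_zero_iff]
    exact hw0
  set E : Ideal Rᵐᵒᵖ := rightAnn R {w * t} with hEdef
  set N : Ideal Rᵐᵒᵖ := W ⊓ E with hNdef
  by_cases hNbot : N = ⊥
  · refine hEss W hWne ?_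
    rw [inf_comm]
    exact hNbot
  by_cases hNW : W ≤ E
  · have hmem : op w ∈ E := hNW (Submodule.mem_span_singleton_self _)
    exact hwt (mem_rightAnn.1 hmem (w*t) rfl)
  have hNltW : N < W := lt_of_le_of_ne inf_le_left (fun hh => hNW (by rw [← hh]; exact inf_le_right))
  have hNltC : N < C := lt_of_lt_of_le hNltW hWle
  have hNbot' : ⊥ < N := bot_lt_iff_ne_bot.2 hNbot
  have hlt : idel N W < γ := (idel_mono hdev le_rfl hWle).trans_lt (hCcrit N hNbot' hNltC)
  set v := w * t * w with hv
  set V : Ideal Rᵐᵒᵖ := Submodule.span Rᵐᵒᵖ {op v} with hVdef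
  have hVne : V ≠ ⊥ := by
    rw [hVdef]
    simp only [ne_eq, Submodule.span_singleton_eq_bot, op_eq_zero_iff]
    exact hwt
  have hopv : (op v : Rᵐᵒᵖ) = op (t * w) * op w := by
    rw [hv, ← op_mul]
    congr 1
    rw [mul_assoc]
  have hVle : V ≤ W := by
    rw [hVdef, Submodule.span_le, Set.singleton_subset_iff]
    rw [hopv]
    exact Submodule.smul_mem _ (op (t*w)) (Submodule.mem_span_singleton_self _)
  have hVγ : idel ⊥ V = γ := hall V hVne (hVle.trans (hWle.trans hCle))
  set μ := rmul (R := R) (op (w * t)) with hμ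
  have hμapp : ∀ y : Rᵐᵒᵖ, μ y = y * op (w * t) := fun y => rfl
  have hμsmul : ∀ c : Rᵐᵒᵖ, μ (c • op w) = c • op v := by
    intro c
    show (c • op w) * op (w * t) = c • op v
    rw [smul_eq_mul, smul_eq_mul, mul_assoc]
    rfl
  have hrec : ∀ Y : Ideal Rᵐᵒᵖ, Y ≤ V → Submodule.map μ (Submodule.comap μ Y ⊓ W) = Y := by
    intro Y hY
    apply le_antisymm
    · exact (Submodule.map_le_iff_le_comap.2 inf_le_left)
    · intro y hy
      obtain ⟨c, hc⟩ := Submodule.mem_span_singleton.1 (hY hy)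
      refine Submodule.mem_map.2 ⟨c • op w, ⟨?_, ?_⟩, ?_⟩
      · show μ (c • op w) ∈ Y
        rw [hμsmul, hc]
        exact hy
      · exact Submodule.smul_mem _ c (Submodule.mem_span_singleton_self _)
      · rw [hμsmul, hc]
  have hEcomap : ∀ Y : Ideal Rᵐᵒᵖ, E ≤ Submodule.comap μ Y := by
    intro Y x' hx'
    have h0 : (w*t) * x'.unop = 0 := mem_rightAnn.1 hx' (w*t) rfl
    have hμ0 : μ x' = 0 := by
      rw [hμapp, ← op_unop x', ← op_mul, h0, op_zero]
    show μ x' ∈ Y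
    rw [hμ0]
    exact Submodule.zero_mem Y
  have hemb : DevLE (idel N W) {x : Ideal Rᵐᵒᵖ // ⊥ ≤ x ∧ x ≤ V} := by
    refine DevLE.of_embed _ (fun Y =>
      (⟨Submodule.comap μ Y.1 ⊓ W,
        le_inf (le_trans inf_le_right (hEcomap Y.1)) inf_le_left,
        inf_le_right⟩ : {x : Ideal Rᵐᵒᵖ // N ≤ x ∧ x ≤ W})) ?_ (idel_devle hdev N W)
    intro a b
    constructor
    · intro hab
      exact Subtype.mk_le_mk.2
        (inf_le_inf_right W (Submodule.comap_mono (Subtype.coe_le_coe.2 hab)))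
    · intro hab
      have h1 : a.1 = Submodule.map μ (Submodule.comap μ a.1 ⊓ W) := (hrec a.1 a.2.2).symm
      have h2 : Submodule.map μ (Submodule.comap μ b.1 ⊓ W) = b.1 := hrec b.1 b.2.2
      have h3 : a.1 ≤ b.1 := by
        rw [h1, ← h2]
        exact Submodule.map_mono (Subtype.mk_le_mk.1 hab)
      exact Subtype.coe_le_coe.1 h3
  have hle2 : γ ≤ idel N W := by
    rw [← hVγ]
    exact idel_le hemb
  exact absurd hle2 (not_le.2 hlt)

theorem semiprime_wtw
    (hsemi : ∀ K : TwoSidedIdeal R, SetNilpotent (K : Set R) → K = ⊥) :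
    ∀ w : R, w ≠ 0 → ∃ t, w * t * w ≠ 0 := by
  intro w hw
  by_contra hc
  push_neg at hc
  set S : Set R := {x | ∃ r s : R, x = r * w * s} with hS
  set G := AddSubgroup.closure S with hG
  have hmul_left : ∀ (b : R) (a : R), a ∈ G → b * a ∈ G := by
    intro b a ha
    induction ha using AddSubgroup.closure_induction with
    | mem x hx =>
      obtain ⟨r, s, rfl⟩ := hx
      exact AddSubgroup.subset_closure ⟨b * r, s, by noncomm_ring⟩
    | zero => simpa using AddSubgroup.zero_mem G
    | add x y _ _ hx hy => simpa [mul_add] using AddSubgroup.add_mem G hx hy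
    | neg x _ hx => simpa [mul_neg] using AddSubgroup.neg_mem G hx
  have hmul_right : ∀ (b : R) (a : R), a ∈ G → a * b ∈ G := by
    intro b a ha
    induction ha using AddSubgroup.closure_induction with
    | mem x hx =>
      obtain ⟨r, s, rfl⟩ := hx
      exact AddSubgroup.subset_closure ⟨r, s * b, by noncomm_ring⟩
    | zero => simpa using AddSubgroup.zero_mem G
    | add x y _ _ hx hy => simpa [add_mul] using AddSubgroup.add_mem G hx hy
    | neg x _ hx => simpa [neg_mul] using AddSubgroup.neg_mem G hx
  set K : TwoSidedIdeal R := TwoSidedIdeal.mk' (G : Set R)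
    (AddSubgroup.zero_mem G)
    (fun ha hb => AddSubgroup.add_mem G ha hb)
    (fun ha => AddSubgroup.neg_mem G ha)
    (fun {x y} hy => hmul_left x y hy)
    (fun {x y} hx => hmul_right y x hx) with hK
  have hprod0 : ∀ a ∈ G, ∀ b ∈ G, a * b = 0 := by
    intro a ha
    induction ha using AddSubgroup.closure_induction with
    | mem x hx =>
      intro b hb
      induction hb using AddSubgroup.closure_induction with
      | mem y hy =>
        obtain ⟨r, s, rfl⟩ := hx
        obtain ⟨r', s', rfl⟩ := hy
        have h0 : w * (s * r') * w = 0 := hc _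
        calc r * w * s * (r' * w * s') = r * (w * (s * r') * w) * s' := by noncomm_ring
        _ = 0 := by rw [h0]; simp
      | zero => simp
      | add y z _ _ hy hz => rw [mul_add, hy, hz]; simp
      | neg y _ hy => rw [mul_neg, hy]; simp
    | zero => intro b _; simp
    | add x y _ _ hx hy => intro b hb; rw [add_mul, hx b hb, hy b hb]; simp
    | neg x _ hx => intro b hb; rw [neg_mul, hx b hb]; simp
  have hnil : SetNilpotent (K : Set R) := by
    refine ⟨2, by norm_num, ?_⟩
    intro l hl hmem
    match l, hl with
    | [a, b], _ =>
      have ha : a ∈ G := by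
        have := hmem a (by simp)
        rwa [hK, SetLike.mem_coe, TwoSidedIdeal.mem_mk'] at this
      have hb : b ∈ G := by
        have := hmem b (by simp)
        rwa [hK, SetLike.mem_coe, TwoSidedIdeal.mem_mk'] at this
      simp [List.prod, hprod0 a ha b hb]
  have hKbot := hsemi K hnil
  have hwK : w ∈ K := by
    rw [hK, TwoSidedIdeal.mem_mk']
    exact AddSubgroup.subset_closure ⟨1, 1, by simp⟩
  rw [hKbot] at hwK
  exact hw (by simpa using hwK)

theorem indep_rat_chain (f : ℕ → Ideal Rᵐᵒᵖ)
    (h0 : ∀ n, f n ≠ ⊥) (hind : iSupIndep f) :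
    ∃ g : ℚ → Ideal Rᵐᵒᵖ, StrictMono g := by
  classical
  set E : ℚ ≃ ℕ := Denumerable.eqv ℚ with hE
  set g : ℚ → Ideal Rᵐᵒᵖ := fun q => ⨆ n : ℕ, ⨆ (_ : E.symm n < q), f n with hg
  refine ⟨g, ?_⟩
  intro q q' hqq'
  have hle : g q ≤ g q' := by
    refine iSup_le fun n => iSup_le fun hn => ?_
    exact le_iSup_of_le n (le_iSup_of_le (hn.trans hqq') le_rfl)
  refine lt_of_le_of_ne hle ?_
  intro heq
  obtain ⟨r, hr1, hr2⟩ := exists_between hqq'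
  set n₀ := E r with hn₀
  have hrn₀ : E.symm n₀ = r := E.symm_apply_apply r
  have h1 : f n₀ ≤ g q' := le_iSup_of_le n₀ (le_iSup_of_le (by rw [hrn₀]; exact hr2) le_rfl)
  have h2 : g q ≤ ⨆ j, ⨆ (_ : j ≠ n₀), f j := by
    refine iSup_le fun n => iSup_le fun hn => ?_
    have : n ≠ n₀ := by
      intro hh
      rw [hh, hrn₀] at hn
      exact absurd (hn.trans hr1) (lt_irrefl r)
    exact le_iSup_of_le n (le_iSup_of_le this le_rfl)
  have h3 : f n₀ ≤ ⨆ j, ⨆ (_ : j ≠ n₀), f j := by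
    refine le_trans h1 (le_trans (le_of_eq heq.symm) h2)
  exact h0 n₀ (le_bot_iff.1 (hind n₀ le_rfl h3))

/-- the relation lemma: the spans of the `c k` are independent -/
theorem rel_zero (g : ℕ → Ideal Rᵐᵒᵖ) (hmono : Monotone g)
    (c : ℕ → Rᵐᵒᵖ) (hc1 : ∀ k, c k ∈ g (k+1))
    (hc2 : ∀ k, Submodule.span Rᵐᵒᵖ {c k} ⊓ g k = ⊥) :
    ∀ s : Finset ℕ, ∀ v : ℕ → Rᵐᵒᵖ, (∀ j ∈ s, v j ∈ Submodule.span Rᵐᵒᵖ {c j}) →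
      (∑ j ∈ s, v j) = 0 → ∀ j ∈ s, v j = 0 := by
  intro s
  induction s using Finset.strongInduction with
  | _ s IH =>
    intro v hv hsum j hj
    rcases Finset.eq_empty_or_nonempty s with rfl | hne
    · simp at hj
    · set M := s.max' hne with hM
      have hMs : M ∈ s := s.max'_mem hne
      have hadd : v M + ∑ i ∈ s.erase M, v i = ∑ i ∈ s, v i := Finset.add_sum_erase s v hMs
      have hvM : v M ∈ g M := by
        have hsum' : v M = -∑ i ∈ s.erase M, v i :=
          eq_neg_of_add_eq_zero_left (hadd.trans hsum)
        rw [hsum']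
        refine Submodule.neg_mem _ (Submodule.sum_mem _ ?_)
        intro i hi
        have hiM : i < M := lt_of_le_of_ne (s.le_max' i (Finset.mem_of_mem_erase hi))
          (Finset.ne_of_mem_erase hi)
        have hvi : v i ∈ g (i+1) :=
          Submodule.span_le.2 (Set.singleton_subset_iff.2 (hc1 i)) (hv i (Finset.mem_of_mem_erase hi))
        exact hmono (Nat.succ_le_of_lt hiM) hvi
      have hvM0 : v M = 0 := by
        have hm : v M ∈ Submodule.span Rᵐᵒᵖ {c M} ⊓ g M := ⟨hv M hMs, hvM⟩
        rw [hc2 M] at hm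
        simpa using hm
      rcases eq_or_ne j M with rfl | hjM
      · exact hvM0
      · refine IH (s.erase M) (Finset.erase_ssubset hMs) v
          (fun i hi => hv i (Finset.mem_of_mem_erase hi)) ?_ j (Finset.mem_erase.2 ⟨hjM, hj⟩)
        have := hadd.trans hsum
        rw [hvM0, zero_add] at this
        exact this

end RingAux

/-- If `A` has right Krull dimension, then every semiprime quotient `A/I` (i.e. `A/I` has
no nonzero nilpotent ideals) is a right Goldie ring. -/
theorem semiprime_quotient_goldie_of_hasRightKrullDim {A : Type} [Ring A]
    (hK : HasRightKrullDim A) (I : TwoSidedIdeal A)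
    (hsemiprime : ∀ K : TwoSidedIdeal I.ringCon.Quotient,
      SetNilpotent (K : Set I.ringCon.Quotient) → K = ⊥) :
    IsRightGoldie I.ringCon.Quotient := by
  classical
  obtain ⟨α₀, hα₀⟩ := hK
  set R := I.ringCon.Quotient with hR
  set π : Aᵐᵒᵖ →+* Rᵐᵒᵖ := RingHom.op I.ringCon.mk' with hπ
  have hπs : Function.Surjective π := by
    intro x
    obtain ⟨a, ha⟩ : ∃ a, I.ringCon.mk' a = x.unop :=
      Quot.inductionOn x.unop (fun a => ⟨a, rfl⟩)
    exact ⟨op a, by rw [hπ]; simp [RingHom.op]; exact congrArg op ha⟩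
  have hdev : DevLE α₀ (Ideal Rᵐᵒᵖ) := by
    refine DevLE.of_embed α₀ (Ideal.comap π) (fun a b => ⟨fun h => Ideal.comap_mono h,
      fun h => ?_⟩) hα₀
    have h2 := Ideal.map_mono (f := π) h
    rwa [Ideal.map_comap_of_surjective π hπs, Ideal.map_comap_of_surjective π hπs] at h2
  have hsp : ∀ w : R, w ≠ 0 → ∃ t, w * t * w ≠ 0 := semiprime_wtw hsemiprime
  constructor
  · rintro ⟨f, h0, hind⟩
    obtain ⟨g, hg⟩ := indep_rat_chain f h0 hind
    exact DevLE.no_rat_chain α₀ hdev g hg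
  · intro f hf
    by_contra hns
    push_neg at hns
    choose nx hnx1 hnx2 using hns
    set nseq : ℕ → ℕ := fun k => Nat.rec 0 (fun _ p => nx p) k with hnseq
    set g : ℕ → Ideal Rᵐᵒᵖ := fun k => f (nseq k) with hgdef
    have hgs : ∀ k, g k < g (k+1) := by
      intro k
      have h1 : nseq (k+1) = nx (nseq k) := rfl
      refine lt_of_le_of_ne (f.mono (by rw [h1]; exact hnx1 (nseq k))) ?_
      show f (nseq k) ≠ f (nseq (k+1))
      rw [h1]
      exact Ne.symm (hnx2 (nseq k))
    have hgmono : Monotone g := monotone_nat_of_le_succ fun k => (hgs k).le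
    choose X hX using fun k => hf (nseq k)
    have hgX : ∀ k, g k = rightAnn I.ringCon.Quotient (X k) := hX
    by_cases hGood : ∀ m : ℕ, ∃ cc : Rᵐᵒᵖ, cc ≠ 0 ∧ cc ∈ g (m+1) ∧
        Submodule.span Rᵐᵒᵖ {cc} ⊓ g m = ⊥
    · -- infinitely many "good" levels: an infinite independent family
      choose c hc0 hc1 hc2 using hGood
      set F : ℕ → Ideal Rᵐᵒᵖ := fun k => Submodule.span Rᵐᵒᵖ {c k} with hFdef
      have hFne : ∀ k, F k ≠ ⊥ := by
        intro k
        rw [hFdef]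
        simp only [ne_eq, Submodule.span_singleton_eq_bot]
        exact hc0 k
      have hFind : iSupIndep F := by
        intro i
        rw [disjoint_iff]
        by_contra hdis
        obtain ⟨y, ⟨hy1, hy2⟩, hy0⟩ := (Submodule.ne_bot_iff _).1 hdis
        obtain ⟨s, hs⟩ := Submodule.mem_iSup_iff_exists_finset.1 hy2
        have hles : (⨆ j ∈ s, ⨆ (_ : j ≠ i), F j) ≤ ⨆ j ∈ s.erase i, F j := by
          refine iSup₂_le fun j hj => iSup_le fun hji =>
            le_iSup₂_of_le j (Finset.mem_erase.2 ⟨hji, hj⟩) le_rfl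
        obtain ⟨μ, hμ⟩ := (Submodule.mem_iSup_finset_iff_exists_sum _ _).1 (hles hs)
        set v : ℕ → Rᵐᵒᵖ := fun j => if j = i then -y else (μ j : Rᵐᵒᵖ) with hvdef
        have hsum : ∑ j ∈ insert i (s.erase i), v j = 0 := by
          rw [Finset.sum_insert (Finset.notMem_erase i s)]
          have : ∑ j ∈ s.erase i, v j = ∑ j ∈ s.erase i, (μ j : Rᵐᵒᵖ) := by
            refine Finset.sum_congr rfl fun j hj => ?_
            rw [hvdef]
            simp only
            rw [if_neg (Finset.mem_erase.1 hj).1]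
          rw [this, hμ]
          have hvi : v i = -y := by rw [hvdef]; simp
          rw [hvi]
          exact neg_add_cancel y
        have hvmem : ∀ j ∈ insert i (s.erase i), v j ∈ Submodule.span Rᵐᵒᵖ {c j} := by
          intro j hj
          rw [hvdef]
          simp only
          by_cases hji : j = i
          · rw [if_pos hji, hji]
            exact Submodule.neg_mem _ hy1
          · rw [if_neg hji]
            exact (μ j).2
        have := rel_zero g hgmono c hc1 hc2 (insert i (s.erase i)) v hvmem hsum i
          (Finset.mem_insert_self i _)
        rw [hvdef] at this
        simp only [if_pos rfl] at this
        exact hy0 (by simpa [neg_eq_zero] using this)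
      obtain ⟨gg, hgg⟩ := indep_rat_chain F hFne hFind
      exact DevLE.no_rat_chain α₀ hdev gg hgg
    · -- a "bad" level: produces a nonzero singular element
      push_neg at hGood
      obtain ⟨m, hbad⟩ := hGood
      obtain ⟨xa, hxa1, hxa2⟩ := SetLike.exists_of_lt (hgs m)
      set a := xa.unop with ha
      have hax : op a = xa := op_unop xa
      -- find x ∈ X m with x * a ≠ 0
      have hnotall : ¬ ∀ xx ∈ X m, xx * a = 0 := by
        intro hall
        exact hxa2 (by rw [hgX m]; exact mem_rightAnn.2 hall)
      push_neg at hnotall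
      obtain ⟨xm, hxm1, hxm2⟩ := hnotall
      set z := xm * a with hzdef
      have hz0 : z ≠ 0 := hxm2
      -- essentiality of the right annihilator of z
      have hess : ∀ J : Ideal Rᵐᵒᵖ, J ≠ ⊥ → rightAnn R {z} ⊓ J ≠ ⊥ := by
        intro J hJ
        obtain ⟨u, huJ, hu0⟩ := (Submodule.ne_bot_iff J).1 hJ
        by_cases hau : a * u.unop = 0
        · refine (Submodule.ne_bot_iff _).2 ⟨u, ⟨?_, huJ⟩, hu0⟩
          refine mem_rightAnn.2 ?_
          intro y hy
          rw [Set.mem_singleton_iff] at hy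
          subst hy
          rw [hzdef, mul_assoc, hau, mul_zero]
        · set cc := op (a * u.unop) with hcc
          have hcc0 : cc ≠ 0 := by
            rw [hcc]
            simp only [ne_eq, op_eq_zero_iff]
            exact hau
          have hccin : cc ∈ g (m+1) := by
            rw [hcc, show op (a * u.unop) = u * op a from rfl, hax]
            exact Ideal.mul_mem_left _ u hxa1
          have hspan := hbad cc hcc0 hccin
          obtain ⟨y, ⟨hy1, hy2⟩, hy0⟩ := (Submodule.ne_bot_iff _).1 hspan
          obtain ⟨dd, hdd⟩ := Submodule.mem_span_singleton.1 hy1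
          have hyval : y.unop = a * u.unop * dd.unop := by
            rw [← hdd, hcc]
            simp [smul_eq_mul, unop_mul]
          have hxy : xm * y.unop = 0 := by
            rw [hgX m] at hy2
            exact mem_rightAnn.1 hy2 xm hxm1
          refine (Submodule.ne_bot_iff _).2 ⟨op (u.unop * dd.unop), ⟨?_, ?_⟩, ?_⟩
          · refine mem_rightAnn.2 ?_
            intro yy hyy
            rw [Set.mem_singleton_iff] at hyy
            subst hyy
            rw [unop_op, hzdef]
            calc xm * a * (u.unop * dd.unop) = xm * (a * u.unop * dd.unop) := by noncomm_ring
            _ = xm * y.unop := by rw [← hyval]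
            _ = 0 := hxy
          · have : op (u.unop * dd.unop) = dd • u := by
              simp [smul_eq_mul, op_mul]
            rw [this]
            exact J.smul_mem dd huJ
          · intro hh
            apply hy0
            have : u.unop * dd.unop = 0 := (op_eq_zero_iff _).1 hh
            rw [← op_unop y, hyval, mul_assoc, this, mul_zero, op_zero]
      exact (no_singular hdev hsp z hz0 hess).elim
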